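/- If n = 4k+3, then a tree T on n vertices attains d(C(T), CT(T)) = k if T is the (2k+2)-comet of order n. -/

import Mathlib

open SimpleGraph Finset

/-- Eccentricity of a vertex: max distance to any vertex. -/
noncomputable def ecc {V : Type*} [Fintype V] (G : SimpleGraph V) (v : V) : ℕ :=
  Finset.univ.sup (fun u => G.dist v u)

/-- The center: vertices of minimum eccentricity. -/
noncomputable def center {V : Type*} [Fintype V] (G : SimpleGraph V) : Set V :=
  {v | ∀ u, ecc G v ≤ ecc G u}

/-- Total distance of a vertex. -/
noncomputable def totalDist {V : Type*} [Fintype V] (G : SimpleGraph V) (v : V) : ℕ :=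
  ∑ u, G.dist v u

/-- The centroid: vertices of minimum total distance. -/
noncomputable def centroid {V : Type*} [Fintype V] (G : SimpleGraph V) : Set V :=
  {v | ∀ u, totalDist G v ≤ totalDist G u}

/-- Number of subtrees (connected induced subgraphs on nonempty vertex sets) containing `v`. -/
noncomputable def subtreeCount {V : Type*} [Fintype V] (G : SimpleGraph V) (v : V) : ℕ :=
  Nat.card {A : Finset V // v ∈ A ∧ (G.induce (A : Set V)).Connected}

/-- The subtree core: vertices maximizing the number of containing subtrees. -/
noncomputable def core {V : Type*} [Fintype V] (G : SimpleGraph V) : Set V :=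
  {v | ∀ u, subtreeCount G u ≤ subtreeCount G v}

/-- Distance between two sets of vertices. -/
noncomputable def setDist {V : Type*} (G : SimpleGraph V) (S S' : Set V) : ℕ :=
  sInf {n | ∃ u ∈ S, ∃ v ∈ S', G.dist u v = n}

/-- The `r`-comet of order `n`: a path on vertices `0, …, r-1`
with `n - r` pendant vertices attached to the end vertex `0`. -/
def comet (n r : ℕ) : SimpleGraph (Fin n) :=
  SimpleGraph.fromRel (fun a b =>
    (a.val + 1 = b.val ∧ b.val < r) ∨ (a.val = 0 ∧ r ≤ b.val))

lemma exists_walk_of_step {V : Type*} (G : SimpleGraph V) (t : V) (d : V → ℕ)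
    (h0 : d t = 0) (hstep : ∀ v, v ≠ t → ∃ w, G.Adj v w ∧ d w + 1 = d v) :
    ∀ v, ∃ p : G.Walk v t, p.length = d v := by
  have key : ∀ m v, d v = m → ∃ p : G.Walk v t, p.length = d v := by
    intro m
    induction m using Nat.strong_induction_on with
    | _ m ih =>
      intro v hv
      by_cases hvt : v = t
      · subst hvt; exact ⟨SimpleGraph.Walk.nil, by simp [h0]⟩
      · obtain ⟨w, hadj, hw⟩ := hstep v hvt
        obtain ⟨p, hp⟩ := ih (d w) (by omega) w rfl
        exact ⟨SimpleGraph.Walk.cons hadj p, by simp [SimpleGraph.Walk.length_cons, hp]; omega⟩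
  exact fun v => key (d v) v rfl

lemma le_length_walk {V : Type*} (G : SimpleGraph V) (t : V) (d : V → ℕ)
    (h0 : d t = 0) (hlip : ∀ a b, G.Adj a b → d a ≤ d b + 1) :
    ∀ v (p : G.Walk v t), d v ≤ p.length := by
  intro v p
  induction p with
  | nil => simp [h0]
  | cons h p ih =>
    rw [SimpleGraph.Walk.length_cons]
    exact le_trans (hlip _ _ h) (by omega)

lemma dist_eq_of {V : Type*} (G : SimpleGraph V) (t : V) (d : V → ℕ)
    (h0 : d t = 0)
    (hstep : ∀ v, v ≠ t → ∃ w, G.Adj v w ∧ d w + 1 = d v)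
    (hlip : ∀ a b, G.Adj a b → d a ≤ d b + 1) (v : V) :
    G.dist v t = d v := by
  obtain ⟨p, hp⟩ := exists_walk_of_step G t d h0 hstep v
  refine le_antisymm (hp ▸ SimpleGraph.dist_le p) ?_
  obtain ⟨q, hq⟩ := SimpleGraph.Reachable.exists_walk_length_eq_dist (G := G) ⟨p⟩
  exact hq ▸ le_length_walk G t d h0 hlip v q

lemma comet_adj {n r : ℕ} (a b : Fin n) (h : a.val ≠ b.val)
    (hc : (a.val + 1 = b.val ∧ b.val < r) ∨ (a.val = 0 ∧ r ≤ b.val) ∨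
     (b.val + 1 = a.val ∧ a.val < r) ∨ (b.val = 0 ∧ r ≤ a.val)) : (comet n r).Adj a b := by
  simp only [comet, SimpleGraph.fromRel_adj]
  exact ⟨fun he => h (congrArg Fin.val he), by tauto⟩

def D (k a b : ℕ) : ℕ :=
  if a < 2*k+2 then (if b < 2*k+2 then Nat.dist a b else a + 1)
  else (if b < 2*k+2 then b + 1 else if a = b then 0 else 2)

lemma D_eval (k a b : ℕ) : D k a b =
    if a < 2*k+2 then (if b < 2*k+2 then (a - b) + (b - a) else a + 1)
    else (if b < 2*k+2 then b + 1 else if a = b then 0 else 2) := rfl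

lemma comet_dist (k : ℕ) (a b : Fin (4*k+3)) :
    (comet (4*k+3) (2*k+2)).dist a b = D k a.val b.val := by
  refine dist_eq_of _ b (fun v => D k v.val b.val) ?_ ?_ ?_ a
  · simp only [D_eval]; split_ifs <;> omega
  · intro v hvb
    have hvb' : v.val ≠ b.val := fun h => hvb (Fin.ext h)
    by_cases hv : v.val < 2*k+2 <;> by_cases hb : b.val < 2*k+2
    · rcases Nat.lt_or_ge v.val b.val with h | h
      · have hw : v.val + 1 < 4*k+3 := by omega
        refine ⟨⟨v.val+1, hw⟩, comet_adj _ _ (by simp only [Fin.val_mk]; omega)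
          (Or.inl ⟨rfl, by simp only [Fin.val_mk]; omega⟩), ?_⟩
        simp only [Fin.val_mk, D_eval]; split_ifs <;> omega
      · have hw : v.val - 1 < 4*k+3 := by omega
        refine ⟨⟨v.val-1, hw⟩, comet_adj _ _ (by simp only [Fin.val_mk]; omega)
          (Or.inr (Or.inr (Or.inl ⟨by simp only [Fin.val_mk]; omega, hv⟩))), ?_⟩
        simp only [Fin.val_mk, D_eval]; split_ifs <;> omega
    · rcases Nat.eq_zero_or_pos v.val with h0 | h0
      · refine ⟨b, comet_adj _ _ hvb' (Or.inr (Or.inl ⟨h0, by omega⟩)), ?_⟩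
        simp only [D_eval]; split_ifs <;> omega
      · have hw : v.val - 1 < 4*k+3 := by omega
        refine ⟨⟨v.val-1, hw⟩, comet_adj _ _ (by simp only [Fin.val_mk]; omega)
          (Or.inr (Or.inr (Or.inl ⟨by simp only [Fin.val_mk]; omega, hv⟩))), ?_⟩
        simp only [Fin.val_mk, D_eval]; split_ifs <;> omega
    · have hw : (0:ℕ) < 4*k+3 := by omega
      refine ⟨⟨0, hw⟩, comet_adj _ _ (by simp only [Fin.val_mk]; omega)
        (Or.inr (Or.inr (Or.inr ⟨rfl, by omega⟩))), ?_⟩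
      simp only [Fin.val_mk, D_eval]; split_ifs <;> omega
    · have hw : (0:ℕ) < 4*k+3 := by omega
      refine ⟨⟨0, hw⟩, comet_adj _ _ (by simp only [Fin.val_mk]; omega)
        (Or.inr (Or.inr (Or.inr ⟨rfl, by omega⟩))), ?_⟩
      simp only [Fin.val_mk, D_eval]; split_ifs <;> omega
  · intro x y hxy
    simp only [comet, SimpleGraph.fromRel_adj] at hxy
    obtain ⟨hne, hR⟩ := hxy
    simp only [D_eval]
    rcases hR with (⟨h1, h2⟩ | ⟨h1, h2⟩) | (⟨h1, h2⟩ | ⟨h1, h2⟩) <;> split_ifs <;> omega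

lemma ecc_comet (k : ℕ) (v : Fin (4*k+3)) :
    ecc (comet (4*k+3) (2*k+2)) v =
      if v.val < 2*k+2 then max (v.val+1) (2*k+1-v.val) else 2*k+2 := by
  unfold ecc
  rcases lt_or_ge v.val (2*k+2) with hv | hv
  · rw [if_pos hv]
    apply le_antisymm
    · apply Finset.sup_le; intro u _; rw [comet_dist, D_eval]
      have hu := u.isLt; split_ifs <;> omega
    · apply max_le
      · calc v.val + 1 = (comet (4*k+3) (2*k+2)).dist v ⟨2*k+2, by omega⟩ := by
              rw [comet_dist, D_eval]; simp only [Fin.val_mk]; split_ifs <;> omega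
          _ ≤ _ := Finset.le_sup (Finset.mem_univ _)
      · calc 2*k+1 - v.val = (comet (4*k+3) (2*k+2)).dist v ⟨2*k+1, by omega⟩ := by
              rw [comet_dist, D_eval]; simp only [Fin.val_mk]; split_ifs <;> omega
          _ ≤ _ := Finset.le_sup (Finset.mem_univ _)
  · rw [if_neg (by omega)]
    apply le_antisymm
    · apply Finset.sup_le; intro u _; rw [comet_dist, D_eval]
      have hu := u.isLt; split_ifs <;> omega
    · calc 2*k+2 = (comet (4*k+3) (2*k+2)).dist v ⟨2*k+1, by omega⟩ := by
            rw [comet_dist, D_eval]; simp only [Fin.val_mk]; split_ifs <;> omega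
        _ ≤ _ := Finset.le_sup (Finset.mem_univ _)

lemma sum_dist_base (j : ℕ) : 2 * ∑ i ∈ Finset.range (j+1), Nat.dist j i = j*(j+1) := by
  induction j with
  | zero => simp
  | succ j ih =>
    rw [Finset.sum_range_succ, Nat.dist_self, add_zero]
    have hc : ∑ i ∈ Finset.range (j+1), Nat.dist (j+1) i
        = (∑ i ∈ Finset.range (j+1), Nat.dist j i) + (j+1) := by
      calc ∑ i ∈ Finset.range (j+1), Nat.dist (j+1) i
          = ∑ i ∈ Finset.range (j+1), (Nat.dist j i + 1) := by
            refine Finset.sum_congr rfl fun i hi => ?_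
            have := Finset.mem_range.mp hi
            show (j+1-i)+(i-(j+1)) = (j-i)+(i-j)+1
            omega
        _ = _ := by
            rw [Finset.sum_add_distrib, Finset.sum_const, Finset.card_range, smul_eq_mul,
              mul_one]
    rw [hc]
    have h2 : (j+1)*((j+1)+1) = j*(j+1) + 2*(j+1) := by ring
    linarith [ih, h2]

lemma sum_dist' (j d : ℕ) :
    2 * ∑ i ∈ Finset.range (j+1+d), Nat.dist j i = j*(j+1) + d*(d+1) := by
  induction d with
  | zero => simpa using sum_dist_base j
  | succ d ih =>
    have he : j+1+(d+1) = (j+1+d)+1 := by omega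
    rw [he, Finset.sum_range_succ]
    have hd : Nat.dist j (j+1+d) = d+1 := by
      show (j-(j+1+d))+((j+1+d)-j) = d+1; omega
    rw [hd, Nat.mul_add, ih]
    have h2 : (d+1)*((d+1)+1) = d*(d+1) + 2*(d+1) := by ring
    linarith [h2]

lemma td_comet (k : ℕ) (v : Fin (4*k+3)) :
    2 * totalDist (comet (4*k+3) (2*k+2)) v =
      if v.val < 2*k+2 then
        v.val*(v.val+1) + (2*k+1-v.val)*(2*k+2-v.val) + 2*((2*k+1)*(v.val+1))
      else (2*k+2)*(2*k+3) + 8*k := by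
  unfold totalDist
  have hsum : ∑ u : Fin (4*k+3), (comet (4*k+3) (2*k+2)).dist v u
      = ∑ i ∈ Finset.range (4*k+3), D k v.val i := by
    rw [← Fin.sum_univ_eq_sum_range (fun i => D k v.val i) (4*k+3)]
    exact Finset.sum_congr rfl fun u _ => comet_dist k v u
  rw [hsum, Finset.range_eq_Ico,
    ← Finset.sum_Ico_consecutive _ (by omega : 0 ≤ 2*k+2) (by omega : 2*k+2 ≤ 4*k+3),
    ← Finset.range_eq_Ico]
  rcases lt_or_ge v.val (2*k+2) with hv | hv
  · rw [if_pos hv]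
    set j := v.val with hj
    have h1 : ∑ i ∈ Finset.range (2*k+2), D k j i
        = ∑ i ∈ Finset.range (2*k+2), Nat.dist j i := by
      refine Finset.sum_congr rfl fun i hi => ?_
      have := Finset.mem_range.mp hi
      rw [D_eval, if_pos hv, if_pos this]; rfl
    have h2 : ∑ i ∈ Finset.Ico (2*k+2) (4*k+3), D k j i
        = ∑ i ∈ Finset.Ico (2*k+2) (4*k+3), (j+1) := by
      refine Finset.sum_congr rfl fun i hi => ?_
      have := Finset.mem_Ico.mp hi
      rw [D_eval, if_pos hv, if_neg (by omega)]
    rw [h1, h2, Finset.sum_const, Nat.card_Ico, smul_eq_mul]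
    have hs : 2 * ∑ i ∈ Finset.range (2*k+2), Nat.dist j i
        = j*(j+1) + (2*k+1-j)*((2*k+1-j)+1) := by
      have hr : 2*k+2 = j+1+(2*k+1-j) := by omega
      rw [hr]; exact sum_dist' j (2*k+1-j)
    have hp : (2*k+1-j)*((2*k+1-j)+1) = (2*k+1-j)*(2*k+2-j) := by
      congr 1; omega
    have hq : 4*k+3-(2*k+2) = 2*k+1 := by omega
    rw [hq]
    linarith [hs, hp]
  · rw [if_neg (by omega)]
    have h1 : ∑ i ∈ Finset.range (2*k+2), D k v.val i
        = (∑ i ∈ Finset.range (2*k+2), i) + (2*k+2) := by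
      calc ∑ i ∈ Finset.range (2*k+2), D k v.val i
          = ∑ i ∈ Finset.range (2*k+2), (i+1) := by
            refine Finset.sum_congr rfl fun i hi => ?_
            have := Finset.mem_range.mp hi
            rw [D_eval, if_neg (by omega), if_pos this]
        _ = _ := by
            rw [Finset.sum_add_distrib, Finset.sum_const, Finset.card_range, smul_eq_mul,
              mul_one]
    have hmem : v.val ∈ Finset.Ico (2*k+2) (4*k+3) := by
      rw [Finset.mem_Ico]; exact ⟨hv, v.isLt⟩
    have h2 : ∑ i ∈ Finset.Ico (2*k+2) (4*k+3), D k v.val i = 4*k := by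
      rw [← Finset.sum_erase_add _ _ hmem]
      have hz : D k v.val v.val = 0 := by rw [D_eval, if_neg (by omega), if_neg (by omega), if_pos rfl]
      rw [hz, add_zero]
      have hc : ∑ i ∈ (Finset.Ico (2*k+2) (4*k+3)).erase v.val, D k v.val i
          = ∑ i ∈ (Finset.Ico (2*k+2) (4*k+3)).erase v.val, 2 := by
        refine Finset.sum_congr rfl fun i hi => ?_
        have hne := Finset.ne_of_mem_erase hi
        have hm := Finset.mem_Ico.mp (Finset.mem_of_mem_erase hi)
        rw [D_eval, if_neg (by omega), if_neg (by omega), if_neg (fun h => hne h.symm)]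
      rw [hc, Finset.sum_const, smul_eq_mul, Finset.card_erase_of_mem hmem, Nat.card_Ico]
      omega
    rw [h1, h2]
    have hg := Finset.sum_range_id_mul_two (2*k+2)
    have hA : (2*k+2)*(2*k+2-1) = (2*k+2)*(2*k+1) := by congr 1
    have hB : (2*k+2)*(2*k+3) = (2*k+2)*(2*k+1) + 2*(2*k+2) := by ring
    linarith [hg, hA, hB]

lemma center_comet (k : ℕ) :
    _root_.center (comet (4*k+3) (2*k+2)) = {(⟨k, by omega⟩ : Fin (4*k+3))} := by
  have hlow : ∀ u : Fin (4*k+3), k+1 ≤ ecc (comet (4*k+3) (2*k+2)) u := by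
    intro u; rw [ecc_comet]; split_ifs <;> omega
  have hk : ecc (comet (4*k+3) (2*k+2)) ⟨k, by omega⟩ = k+1 := by
    rw [ecc_comet]; simp only [Fin.val_mk]; rw [if_pos (by omega)]; omega
  ext v
  simp only [_root_.center, Set.mem_setOf_eq, Set.mem_singleton_iff]
  constructor
  · intro hv
    have h1 := hv ⟨k, by omega⟩
    rw [hk, ecc_comet] at h1
    apply Fin.ext
    simp only [Fin.val_mk]
    split_ifs at h1 <;> omega
  · intro hv u
    subst hv
    rw [hk]; exact hlow u

lemma centroid_comet (k : ℕ) :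
    centroid (comet (4*k+3) (2*k+2)) = {(⟨0, by omega⟩ : Fin (4*k+3))} := by
  have h0 : 2 * totalDist (comet (4*k+3) (2*k+2)) ⟨0, by omega⟩
      = (2*k+1)*(2*k+2) + 2*((2*k+1)*1) := by
    rw [td_comet]; simp only [Fin.val_mk]; rw [if_pos (by omega)]
    simp
  have hstrict : ∀ v : Fin (4*k+3), v.val ≠ 0 →
      totalDist (comet (4*k+3) (2*k+2)) ⟨0, by omega⟩ < totalDist (comet (4*k+3) (2*k+2)) v := by
    intro v hv0
    have hd := td_comet k v
    have hdouble : 2 * totalDist (comet (4*k+3) (2*k+2)) ⟨0, by omega⟩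
        < 2 * totalDist (comet (4*k+3) (2*k+2)) v := by
      rcases lt_or_ge v.val (2*k+2) with hv | hv
      · rw [if_pos hv] at hd
        set j := v.val with hj
        set d := 2*k+1-j with hdd
        have e2 : 2*k+2-j = d+1 := by omega
        have e3 : 2*k+1 = j+d := by omega
        have e4 : 2*k+2 = j+d+1 := by omega
        rw [e2, e3] at hd
        have h0' := h0.trans (by rw [e3, e4])
        rw [h0', hd]
        have key : (j+d)*(j+d+1) + 2*((j+d)*1) + 2*(j*j)
            = j*(j+1) + d*(d+1) + 2*((j+d)*(j+1)) := by ring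
        have hj1 : 1 ≤ j := Nat.pos_of_ne_zero hv0
        have hjj : 1*1 ≤ j*j := Nat.mul_le_mul hj1 hj1
        linarith [key, hjj]
      · rw [if_neg (by omega)] at hd
        rw [h0, hd]
        have key2 : (2*k+1)*(2*k+2) + 2*((2*k+1)*1) + (8*k+2)
            = (2*k+2)*(2*k+3) + 8*k := by ring
        linarith [key2]
    omega
  ext v
  simp only [_root_.centroid, Set.mem_setOf_eq, Set.mem_singleton_iff]
  constructor
  · intro hv
    by_contra hne
    have hv0 : v.val ≠ 0 := by
      intro h; exact hne (Fin.ext h)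
    have := hstrict v hv0
    have h2 := hv ⟨0, by omega⟩
    omega
  · intro hv u
    subst hv
    rcases Nat.eq_zero_or_pos u.val with h | h
    · have : u = ⟨0, by omega⟩ := Fin.ext h
      rw [this]
    · exact le_of_lt (hstrict u (by omega))

lemma setDist_singleton {V : Type*} (G : SimpleGraph V) (x y : V) :
    setDist G {x} {y} = G.dist x y := by
  unfold setDist
  have h : {n | ∃ u ∈ ({x} : Set V), ∃ v ∈ ({y} : Set V), G.dist u v = n} = {G.dist x y} := by
    ext m
    simp [eq_comm]
  rw [h]
  exact csInf_singleton _

/-- for `n = 4k+3`, the `(2k+2)`-comet of order `n` attains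
`d(C(T), CT(T)) = k`. -/
theorem comet_center_centroid_dist (k n : ℕ) (hn : n = 4 * k + 3) :
    setDist (comet n (2 * k + 2)) (_root_.center (comet n (2 * k + 2)))
      (centroid (comet n (2 * k + 2))) = k := by
  subst hn
  rw [center_comet, centroid_comet, setDist_singleton, comet_dist, D_eval]
  simp only [Fin.val_mk]
  rw [if_pos (by omega : k < 2*k+2), if_pos (by omega : (0:ℕ) < 2*k+2)]
  omega
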